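/- Let A and B be algebraic operators on a complex vector space V such that both A and B commute with the product AB (i.e., A(AB) = (AB)A and B(AB) = (AB)B). Then the operator AB is algebraic. -/
import Mathlib


theorem product_of_algebraic_commuting_with_product_is_algebraic
    {V : Type*} [AddCommGroup V] [Module ℂ V]
    (A B : Module.End ℂ V)
    (hA : IsAlgebraic ℂ A) (hB : IsAlgebraic ℂ B)
    (h1 : A * (A * B) = (A * B) * A) (h2 : B * (A * B) = (A * B) * B) :
    IsAlgebraic ℂ (A * B) := by
  -- Key: (A*B)^n = A^n * B^n
  have hcomm : Commute (A * B) A := (Commute.symm h1)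
  have hpow : ∀ n : ℕ, (A * B) ^ n = A ^ n * B ^ n := by
    intro n
    induction n with
    | zero => simp
    | succ n ih =>
      calc (A * B) ^ (n + 1) = (A * B) * (A * B) ^ n := by rw [pow_succ']
        _ = (A * B) * (A ^ n * B ^ n) := by rw [ih]
        _ = ((A * B) * A ^ n) * B ^ n := by noncomm_ring
        _ = (A ^ n * (A * B)) * B ^ n := by rw [(hcomm.pow_right n).eq]
        _ = A ^ (n + 1) * B ^ (n + 1) := by
            rw [pow_succ, pow_succ']; noncomm_ring
  -- finitely generated submodules
  have hAi : IsIntegral ℂ A := hA.isIntegral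
  have hBi : IsIntegral ℂ B := hB.isIntegral
  set MA := Subalgebra.toSubmodule (Algebra.adjoin ℂ {A})
  set MB := Subalgebra.toSubmodule (Algebra.adjoin ℂ {B})
  have hMA : MA.FG := hAi.fg_adjoin_singleton
  have hMB : MB.FG := hBi.fg_adjoin_singleton
  have hM : (MA * MB).FG := hMA.mul hMB
  set N := Subalgebra.toSubmodule (Algebra.adjoin ℂ {A * B})
  have hle : N ≤ MA * MB := by
    intro x hx
    rw [Subalgebra.mem_toSubmodule, Algebra.adjoin_singleton_eq_range_aeval] at hx
    obtain ⟨p, rfl⟩ := hx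
    show Polynomial.aeval (A * B) p ∈ MA * MB
    rw [Polynomial.aeval_eq_sum_range]
    apply Submodule.sum_mem
    intro i _
    apply Submodule.smul_mem
    rw [hpow i]
    exact Submodule.mul_mem_mul
      ((Subalgebra.mem_toSubmodule _).mpr (pow_mem (Algebra.self_mem_adjoin_singleton ℂ A) i))
      ((Subalgebra.mem_toSubmodule _).mpr (pow_mem (Algebra.self_mem_adjoin_singleton ℂ B) i))
  have hNoeth : IsNoetherian ℂ (MA * MB) := isNoetherian_of_fg_of_noetherian _ hM
  have hNfg : N.FG := by
    have h1' : (N.comap (MA * MB).subtype).FG := IsNoetherian.noetherian _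
    have h2' : (N.comap (MA * MB).subtype).map (MA * MB).subtype = N := by
      rw [Submodule.map_comap_subtype, inf_eq_right.mpr hle]
    rw [← h2']
    exact h1'.map _
  exact (IsIntegral.of_mem_of_fg _ hNfg (A * B)
    (Algebra.self_mem_adjoin_singleton ℂ _)).isAlgebraic
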